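/- Let p_1,…,p_q ≥ 1 be integers with sum p < n and max_{1≤i≤q} p_i ≤ η p for some η ∈ (0,1). Then σ_n² = 2{Σ_{i=1}^q log(1 − p_i/n) − log(1 − p/n)} ≥ −2(1 − η)(log(1 − p/n) + p/n) > 0; consequently, along any sequence of such configurations with inf_n p/n > 0 and sup_n p/n < 1 one has inf_n σ_n² > 0. -/

import Mathlib

open MeasureTheory ProbabilityTheory Filter Matrix Finset Topology

noncomputable section

/-- The matrix (w.r.t. the standard basis) of the orthogonal projection of `ℝⁿ`
onto the orthogonal complement of the span of a set `S` of vectors. -/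
def projCompl {n : ℕ} (S : Set (EuclideanSpace ℝ (Fin n))) :
    Matrix (Fin n) (Fin n) ℝ :=
  Matrix.toEuclideanLin.symm
    ((Submodule.span ℝ S)ᗮ.subtypeL.toLinearMap ∘ₗ
      (Submodule.orthogonalProjection (Submodule.span ℝ S)ᗮ).toLinearMap)

/-- The quadratic form `vᵀ A v`. -/
def quadForm {n : ℕ} (A : Matrix (Fin n) (Fin n) ℝ) (v : Fin n → ℝ) : ℝ :=
  v ⬝ᵥ A.mulVec v

/-- `σ_n² = 2{Σ_{i=1}^q log(1 - p_i/n) - log(1 - p/n)}`. -/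
def sigSq (n p q : ℕ) (psz : ℕ → ℕ) : ℝ :=
  2 * ((∑ j ∈ Finset.range q, Real.log (1 - (psz j : ℝ) / n)) -
    Real.log (1 - (p : ℝ) / n))

/-- derivative helper: `g t = t²/(1-t) + 2 log(1-t) + 2t` has derivative `t²/(1-t)²`. -/
lemma aux_hasDerivAt_g {x : ℝ} (hx1 : x < 1) :
    HasDerivAt (fun y : ℝ => y^2/(1-y) + 2*Real.log (1-y) + 2*y)
      (x^2/(1-x)^2) x := by
  have h1x : (1:ℝ) - x ≠ 0 := by intro h; linarith [h]
  have hd1 : HasDerivAt (fun y : ℝ => 1 - y) (-1) x := by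
    simpa using (hasDerivAt_id x).const_sub 1
  have hd2 : HasDerivAt (fun y : ℝ => y^2/(1-y))
      (((2:ℕ) * x ^ (2-1) * (1-x) - x^2 * (-1))/(1-x)^2) x :=
    (hasDerivAt_pow 2 x).div hd1 h1x
  have hd3 : HasDerivAt (fun y : ℝ => Real.log (1-y)) ((1-x)⁻¹ * (-1)) x :=
    (Real.hasDerivAt_log h1x).comp x hd1
  have := (hd2.add (hd3.const_mul 2)).add ((hasDerivAt_id x).const_mul 2)
  refine this.congr_deriv ?_
  field_simp
  ring

lemma aux_g_nonneg {t : ℝ} (h0 : 0 ≤ t) (h1 : t < 1) :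
    0 ≤ t^2/(1-t) + 2*Real.log (1-t) + 2*t := by
  set g : ℝ → ℝ := fun y => y^2/(1-y) + 2*Real.log (1-y) + 2*y with hg
  have diff : ∀ x ∈ Set.Ico (0:ℝ) 1, HasDerivAt g (x^2/(1-x)^2) x :=
    fun x hx => aux_hasDerivAt_g hx.2
  have mono : MonotoneOn g (Set.Ico (0:ℝ) 1) := by
    apply monotoneOn_of_deriv_nonneg (convex_Ico 0 1)
    · exact fun x hx => (diff x hx).differentiableAt.continuousAt.continuousWithinAt
    · exact fun x hx => (diff x (interior_subset hx)).differentiableAt.differentiableWithinAt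
    · intro x hx
      rw [(diff x (interior_subset hx)).deriv]
      have hx' := interior_subset hx
      have : (0:ℝ) < 1 - x := by linarith [hx'.2]
      positivity
  have hg0 : g 0 = 0 := by simp [hg]
  have := mono (Set.mem_Ico.mpr ⟨le_refl 0, by norm_num⟩) (Set.mem_Ico.mpr ⟨h0, h1⟩) h0
  rw [hg0] at this
  exact this

lemma aux_psi_mono {s t : ℝ} (hs : 0 < s) (hst : s ≤ t) (ht : t < 1) :
    -(Real.log (1-s) + s)/s^2 ≤ -(Real.log (1-t) + t)/t^2 := by
  set ψ : ℝ → ℝ := fun y => -(Real.log (1-y) + y)/y^2 with hψ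
  have diff : ∀ x ∈ Set.Ioo (0:ℝ) 1,
      HasDerivAt ψ ((x^2/(1-x) + 2*Real.log (1-x) + 2*x)/x^3) x := by
    intro x hx
    obtain ⟨hx0, hx1⟩ := hx
    have h1x : (1:ℝ) - x ≠ 0 := by intro h; linarith
    have hx0' : x ≠ 0 := ne_of_gt hx0
    have hd1 : HasDerivAt (fun y : ℝ => 1 - y) (-1) x := by
      simpa using (hasDerivAt_id x).const_sub 1
    have hd3 : HasDerivAt (fun y : ℝ => Real.log (1-y)) ((1-x)⁻¹ * (-1)) x :=
      (Real.hasDerivAt_log h1x).comp x hd1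
    have hdN : HasDerivAt (fun y : ℝ => -(Real.log (1-y) + y))
        (-((1-x)⁻¹ * (-1) + 1)) x := (hd3.add (hasDerivAt_id x)).neg
    have hd := hdN.div (hasDerivAt_pow 2 x) (pow_ne_zero 2 hx0')
    refine hd.congr_deriv ?_
    field_simp
    ring
  have mono : MonotoneOn ψ (Set.Ioo (0:ℝ) 1) := by
    apply monotoneOn_of_deriv_nonneg (convex_Ioo 0 1)
    · exact fun x hx => (diff x hx).differentiableAt.continuousAt.continuousWithinAt
    · intro x hx
      rw [interior_Ioo] at hx
      exact (diff x hx).differentiableAt.differentiableWithinAt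
    · intro x hx
      rw [interior_Ioo] at hx
      rw [(diff x hx).deriv]
      have := aux_g_nonneg hx.1.le hx.2
      have hx3 : (0:ℝ) < x^3 := pow_pos hx.1 3
      exact div_nonneg this hx3.le
  exact mono (Set.mem_Ioo.mpr ⟨hs, lt_of_le_of_lt hst ht⟩)
    (Set.mem_Ioo.mpr ⟨lt_of_lt_of_le hs hst, ht⟩) hst

lemma aux_log_anti {c x : ℝ} (hc0 : 0 ≤ c) (hcx : c ≤ x) (hx1 : x < 1) :
    Real.log (1-x) + x ≤ Real.log (1-c) + c := by
  have h1x : (0:ℝ) < 1 - x := by linarith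
  have h1c : (0:ℝ) < 1 - c := by linarith
  have hd : (0:ℝ) < (1-x)/(1-c) := div_pos h1x h1c
  have h1 := Real.log_le_sub_one_of_pos hd
  rw [Real.log_div (ne_of_gt h1x) (ne_of_gt h1c)] at h1
  have h2 : (1-x)/(1-c) ≤ 1 + (c - x) := by
    rw [div_le_iff₀ h1c]
    nlinarith
  linarith

lemma aux_part1 (n p q : ℕ) (psz : ℕ → ℕ) (η : ℝ) (hη0 : 0 < η) (hη1 : η < 1)
    (hp2 : 2 ≤ p) (hpn : p < n) (h1 : ∀ j < q, 1 ≤ psz j)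
    (hsum : ∑ j ∈ Finset.range q, psz j = p)
    (hη : ∀ j < q, (psz j : ℝ) ≤ η * p) :
    -2 * (1 - η) * (Real.log (1 - (p : ℝ) / n) + (p : ℝ) / n) ≤ sigSq n p q psz ∧
      0 < -2 * (1 - η) * (Real.log (1 - (p : ℝ) / n) + (p : ℝ) / n) := by
  have hn0 : (0:ℝ) < n := by
    have : 0 < n := by omega
    exact_mod_cast this
  set x : ℝ := (p:ℝ)/n with hxdef
  have hx0 : 0 < x := div_pos (by exact_mod_cast (by omega : 0 < p)) hn0
  have hx1 : x < 1 := (div_lt_one hn0).mpr (by exact_mod_cast hpn)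
  have h1x : (0:ℝ) < 1 - x := by linarith
  set Ψ : ℝ := -(Real.log (1-x) + x)/x^2 with hΨdef
  have hΨ0 : 0 ≤ Ψ := by
    have := Real.log_le_sub_one_of_pos h1x
    apply div_nonneg (by linarith) (by positivity)
  have hterm : ∀ j ∈ Finset.range q,
      (-(η * x * Ψ) - 1) * ((psz j : ℝ)/n) ≤ Real.log (1 - (psz j : ℝ)/n) := by
    intro j hj
    rw [Finset.mem_range] at hj
    set y : ℝ := (psz j : ℝ)/n with hydef
    have hy0 : 0 < y := div_pos (by exact_mod_cast h1 j hj) hn0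
    have hyx : y ≤ η * x := by
      rw [hydef, hxdef, ← mul_div_assoc]
      gcongr
      exact hη j hj
    have hyx2 : y ≤ x := le_trans hyx (by nlinarith)
    have hmono := aux_psi_mono hy0 hyx2 hx1
    rw [← hΨdef] at hmono
    have h2 : -(Real.log (1-y) + y) ≤ y^2 * Ψ := by
      have := (div_le_iff₀ (by positivity : (0:ℝ) < y^2)).mp hmono
      linarith
    have h3 : y^2 * Ψ ≤ y * (η * x) * Ψ := by
      have hy2 : y^2 ≤ y * (η*x) := by nlinarith
      exact mul_le_mul_of_nonneg_right hy2 hΨ0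
    nlinarith [h2, h3]
  have hsumy : ∑ j ∈ Finset.range q, (psz j : ℝ)/n = x := by
    rw [← Finset.sum_div, hxdef]
    congr 1
    exact_mod_cast hsum
  have hsumlog : (-(η * x * Ψ) - 1) * x
      ≤ ∑ j ∈ Finset.range q, Real.log (1 - (psz j:ℝ)/n) := by
    calc (-(η * x * Ψ) - 1) * x
        = ∑ j ∈ Finset.range q, (-(η * x * Ψ) - 1) * ((psz j:ℝ)/n) := by
          rw [← Finset.mul_sum, hsumy]
      _ ≤ _ := Finset.sum_le_sum hterm
  have hxΨ : x^2 * Ψ = -(Real.log (1-x) + x) := by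
    rw [hΨdef]
    field_simp
  have hid : (-(η * x * Ψ) - 1) * x = η * (Real.log (1-x) + x) - x := by
    linear_combination (-η) * hxΨ
  rw [hid] at hsumlog
  have hneg : Real.log (1-x) + x < 0 := by
    have := Real.log_lt_sub_one_of_pos h1x (by linarith : (1:ℝ) - x ≠ 1)
    linarith
  constructor
  · show _ ≤ (2:ℝ) * (_ - Real.log (1 - (p:ℝ)/n))
    rw [← hxdef]
    nlinarith [hsumlog]
  · nlinarith [mul_pos (by linarith : (0:ℝ) < 1 - η)
      (by linarith : 0 < -(Real.log (1-x) + x))]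

/-- Inequality (5.4): the lower bound `σ_n² ≥ -2(1-η)(log(1-p/n) + p/n) > 0`, and the
consequence `inf_n σ_n² > 0` along sequences with `0 < inf p/n ≤ sup p/n < 1`. -/
theorem statement_13 :
    (∀ (n p q : ℕ) (psz : ℕ → ℕ) (η : ℝ), 0 < η → η < 1 →
      2 ≤ p → p < n →
      (∀ j < q, 1 ≤ psz j) →
      (∑ j ∈ Finset.range q, psz j = p) →
      (∀ j < q, (psz j : ℝ) ≤ η * p) →
      -2 * (1 - η) * (Real.log (1 - (p : ℝ) / n) + (p : ℝ) / n) ≤ sigSq n p q psz ∧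
        0 < -2 * (1 - η) * (Real.log (1 - (p : ℝ) / n) + (p : ℝ) / n)) ∧
    (∀ (p q : ℕ → ℕ) (psz : ℕ → ℕ → ℕ) (η : ℝ), 0 < η → η < 1 →
      (∀ n, 3 ≤ n → 2 ≤ p n) → (∀ n, 3 ≤ n → p n < n) →
      (∀ n, 3 ≤ n → ∀ j < q n, 1 ≤ psz n j) →
      (∀ n, 3 ≤ n → ∑ j ∈ Finset.range (q n), psz n j = p n) →
      (∀ n, 3 ≤ n → ∀ j < q n, (psz n j : ℝ) ≤ η * p n) →
      (∃ c > 0, ∀ n, 3 ≤ n → c ≤ (p n : ℝ) / n) →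
      (∃ C < 1, ∀ n, 3 ≤ n → (p n : ℝ) / n ≤ C) →
      ∃ c > 0, ∀ n, 3 ≤ n → c ≤ sigSq n (p n) (q n) (psz n)) := by
  constructor
  · exact aux_part1
  · intro p q psz η hη0 hη1 hp2 hpn h1 hsum hη hc hC
    obtain ⟨c, hc0, hcle⟩ := hc
    have hc1 : c < 1 := by
      have h3 := hcle 3 le_rfl
      have hp3 : p 3 < 3 := hpn 3 le_rfl
      have hx3 : (p 3 : ℝ) / ((3:ℕ):ℝ) < 1 := by
        rw [div_lt_one (by norm_num)]
        exact_mod_cast hp3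
      linarith
    refine ⟨-2*(1-η)*(Real.log (1-c)+c), ?_, ?_⟩
    · have hneg : Real.log (1-c) + c < 0 := by
        have := Real.log_lt_sub_one_of_pos (by linarith : (0:ℝ) < 1-c)
          (by linarith : (1:ℝ) - c ≠ 1)
        linarith
      nlinarith [mul_pos (show (0:ℝ) < 1-η by linarith)
        (show 0 < -(Real.log (1-c)+c) by linarith)]
    · intro n hn
      have hpart := aux_part1 n (p n) (q n) (psz n) η hη0 hη1 (hp2 n hn) (hpn n hn)
        (h1 n hn) (hsum n hn) (hη n hn)
      have hn0 : (0:ℝ) < n := by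
        have : 0 < n := by omega
        exact_mod_cast this
      have hx1 : (p n:ℝ)/n < 1 := (div_lt_one hn0).mpr (by exact_mod_cast hpn n hn)
      have hmono := aux_log_anti hc0.le (hcle n hn) hx1
      nlinarith [hpart.1, mul_le_mul_of_nonpos_left hmono
        (by linarith : -2*(1-η) ≤ 0)]
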